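/- Let W ⊆ R^n be a linear subspace admitting a basis ω^1, …, ω^d of nonnegative vectors. Suppose this basis is minimal, meaning there is no other nonnegative basis \hatω^1, …, \hatω^d of W such that each supp(\hatω^i) is contained in some supp(ω^{k_i}) with at least one strict inclusion. Then for any two distinct indices a ≠ b, the only vector z ∈ W with supp(z) ⊆ supp(ω^a) ∩ supp(ω^b) is z = 0. -/

import Mathlib

/-- Key replacement lemma: if v is a nonnegative combination of the ω's with nonzero
coefficient vector and support strictly inside the support of some ω m, then we can
build a "smaller" nonnegative basis. -/
lemma stmt_3_key {n d : ℕ} (W : Submodule ℝ (Fin n → ℝ))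
    (ω : Fin d → Fin n → ℝ)
    (hnn : ∀ k i, 0 ≤ ω k i)
    (hind : LinearIndependent ℝ ω)
    (hspan : Submodule.span ℝ (Set.range ω) = W)
    (v : Fin n → ℝ) (γ : Fin d → ℝ) (m : Fin d)
    (hv : v = ∑ k, γ k • ω k) (hγ : γ ≠ 0) (hvnn : ∀ i, 0 ≤ v i)
    (hsub : Function.support v ⊂ Function.support (ω m)) :
    ∃ η : Fin d → Fin n → ℝ,
      (∀ k i, 0 ≤ η k i) ∧ LinearIndependent ℝ η ∧
      Submodule.span ℝ (Set.range η) = W ∧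
      (∃ k : Fin d → Fin d,
        (∀ i, Function.support (η i) ⊆ Function.support (ω (k i))) ∧
        (∃ i, Function.support (η i) ⊂ Function.support (ω (k i)))) := by
  obtain ⟨j, hj⟩ := Function.ne_iff.mp hγ
  rw [Pi.zero_apply] at hj
  refine ⟨Function.update ω j v, ?_, ?_, ?_, fun i => if i = j then m else i, ?_, ⟨j, ?_⟩⟩
  · intro k i
    by_cases h : k = j
    · subst h; rw [Function.update_self]; exact hvnn i
    · rw [Function.update_of_ne h]; exact hnn k i
  · rw [Fintype.linearIndependent_iff]
    intro g hg
    have hωind := Fintype.linearIndependent_iff.mp hind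
    have h1 : (fun i => g i • Function.update ω j v i)
        = Function.update (fun i => g i • ω i) j (g j • v) := by
      funext i
      by_cases h : i = j
      · subst h; simp
      · simp [Function.update_of_ne h]
    have hLHS : ∑ i, g i • Function.update ω j v i
        = (∑ i, g i • ω i) - g j • ω j + g j • v := by
      rw [h1, Finset.sum_update_of_mem (Finset.mem_univ j),
        Finset.sum_sdiff_eq_sub (Finset.subset_univ {j}), Finset.sum_singleton]
      abel
    have hRHS : ∑ k, (g k + g j * γ k - (if k = j then g j else 0)) • ω k
        = (∑ k, g k • ω k) - g j • ω j + g j • v := by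
      simp only [sub_smul, add_smul, ite_smul, zero_smul, mul_smul]
      rw [Finset.sum_sub_distrib, Finset.sum_add_distrib,
        Finset.sum_ite_eq' Finset.univ j (fun k => g j • ω k), if_pos (Finset.mem_univ j),
        ← Finset.smul_sum, ← hv]
      abel
    have hG : ∀ k, g k + g j * γ k - (if k = j then g j else 0) = 0 := by
      apply hωind
      rw [hRHS, ← hLHS, hg]
    have hgj : g j = 0 := by
      have := hG j
      rw [if_pos rfl] at this
      have : g j * γ j = 0 := by linarith
      exact (mul_eq_zero.mp this).resolve_right hj
    intro i
    have := hG i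
    by_cases h : i = j
    · subst h; exact hgj
    · rw [if_neg h, hgj] at this; linarith
  · apply le_antisymm
    · rw [Submodule.span_le]
      rintro _ ⟨i, rfl⟩
      by_cases h : i = j
      · subst h
        rw [Function.update_self, hv]
        exact Submodule.sum_mem _ fun k _ =>
          Submodule.smul_mem _ _ (hspan ▸ Submodule.subset_span ⟨k, rfl⟩)
      · rw [Function.update_of_ne h]
        exact hspan ▸ Submodule.subset_span ⟨i, rfl⟩
    · rw [← hspan, Submodule.span_le]
      rintro _ ⟨i, rfl⟩
      show ω i ∈ Submodule.span ℝ (Set.range (Function.update ω j v))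
      by_cases h : i = j
      · subst h
        have hid : γ i • ω i = v - ∑ k ∈ Finset.univ.erase i, γ k • ω k := by
          rw [hv, ← Finset.sum_erase_add _ _ (Finset.mem_univ i)]
          abel
        have hmem : v - ∑ k ∈ Finset.univ.erase i, γ k • ω k
            ∈ Submodule.span ℝ (Set.range (Function.update ω i v)) := by
          apply Submodule.sub_mem
          · exact Submodule.subset_span ⟨i, Function.update_self _ _ _⟩
          · apply Submodule.sum_mem
            intro k hk
            have hkj : k ≠ i := Finset.ne_of_mem_erase hk
            have hupd : Function.update ω i v k = ω k := Function.update_of_ne hkj _ _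
            exact hupd ▸ Submodule.smul_mem _ _ (Submodule.subset_span ⟨k, rfl⟩)
        have hrw : ω i = (γ i)⁻¹ • (γ i • ω i) := by
          rw [smul_smul, inv_mul_cancel₀ hj, one_smul]
        rw [hrw, hid]
        exact Submodule.smul_mem _ _ hmem
      · have hupd : ω i = Function.update ω j v i := (Function.update_of_ne h _ _).symm
        rw [hupd]
        exact Submodule.subset_span ⟨i, rfl⟩
  · intro i
    by_cases h : i = j
    · subst h; simp only [Function.update_self, if_pos rfl]; exact hsub.subset
    · simp only [Function.update_of_ne h, if_neg h]
      exact subset_rfl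
  · simp only [Function.update_self, if_pos rfl]; exact hsub

/-- If z ∈ W has a positive entry, support inside supp(ω m), and expansion coefficients c,
then by minimality z must be a positive multiple of ω m. -/
lemma stmt_3_aux {n d : ℕ} (W : Submodule ℝ (Fin n → ℝ))
    (ω : Fin d → Fin n → ℝ)
    (hnn : ∀ k i, 0 ≤ ω k i)
    (hind : LinearIndependent ℝ ω)
    (hspan : Submodule.span ℝ (Set.range ω) = W)
    (hmin : ¬ ∃ η : Fin d → Fin n → ℝ,
      (∀ k i, 0 ≤ η k i) ∧ LinearIndependent ℝ η ∧
      Submodule.span ℝ (Set.range η) = W ∧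
      (∃ k : Fin d → Fin d,
        (∀ i, Function.support (η i) ⊆ Function.support (ω (k i))) ∧
        (∃ i, Function.support (η i) ⊂ Function.support (ω (k i)))))
    (c : Fin d → ℝ) (z : Fin n → ℝ) (m : Fin d)
    (hz : z = ∑ k, c k • ω k)
    (hsupp : Function.support z ⊆ Function.support (ω m))
    (hpos : ∃ i, 0 < z i) :
    0 < c m ∧ ∀ k, k ≠ m → c k = 0 := by
  classical
  obtain ⟨i₁, hi₁⟩ := hpos
  have hSne : (Finset.univ.filter (fun i => 0 < z i)).Nonempty :=
    ⟨i₁, Finset.mem_filter.mpr ⟨Finset.mem_univ _, hi₁⟩⟩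
  obtain ⟨i0, hi0S, hi0min⟩ :=
    Finset.exists_min_image (Finset.univ.filter (fun i => 0 < z i)) (fun i => ω m i / z i) hSne
  have hzi0 : 0 < z i0 := (Finset.mem_filter.mp hi0S).2
  have hωi0 : 0 < ω m i0 := by
    have hmem : i0 ∈ Function.support z := fun h => by rw [h] at hzi0; exact lt_irrefl 0 hzi0
    have := hsupp hmem
    exact lt_of_le_of_ne (hnn m i0) (Ne.symm this)
  set t : ℝ := ω m i0 / z i0 with ht_def
  have ht : 0 < t := div_pos hωi0 hzi0
  set v : Fin n → ℝ := fun i => ω m i - t * z i with hv_def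
  set γ : Fin d → ℝ := fun k => (if k = m then 1 else 0) - t * c k with hγ_def
  have hv : v = ∑ k, γ k • ω k := by
    funext i
    rw [Finset.sum_apply]
    simp only [hγ_def, Pi.smul_apply, smul_eq_mul, sub_mul, ite_mul, one_mul, zero_mul,
      Finset.sum_sub_distrib, Finset.sum_ite_eq' Finset.univ m (fun k => ω k i),
      if_pos (Finset.mem_univ m), mul_assoc, ← Finset.mul_sum]
    have hzi : z i = ∑ k, c k * ω k i := by
      rw [hz, Finset.sum_apply]; simp
    rw [hv_def, ← hzi]
  have hvnn : ∀ i, 0 ≤ v i := by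
    intro i
    by_cases h : 0 < z i
    · have hle : t ≤ ω m i / z i := hi0min i (Finset.mem_filter.mpr ⟨Finset.mem_univ _, h⟩)
      have := (le_div_iff₀ h).mp hle
      simp only [hv_def]; linarith
    · push_neg at h
      have h1 : t * z i ≤ 0 := mul_nonpos_of_nonneg_of_nonpos ht.le h
      have := hnn m i
      simp only [hv_def]; linarith
  have hsubset : Function.support v ⊆ Function.support (ω m) := by
    intro i hi
    by_contra hc
    have hωi : ω m i = 0 := Function.notMem_support.mp hc
    have hzi : z i = 0 := Function.notMem_support.mp (fun h => hc (hsupp h))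
    apply hi
    simp [hv_def, hωi, hzi]
  have hvi0 : v i0 = 0 := by
    simp only [hv_def, ht_def]
    rw [div_mul_cancel₀ _ (ne_of_gt hzi0)]
    ring
  have hsub : Function.support v ⊂ Function.support (ω m) := by
    refine ⟨hsubset, fun hcon => ?_⟩
    have : i0 ∈ Function.support v := hcon (ne_of_gt hωi0)
    exact this hvi0
  by_cases hγ0 : γ = 0
  · have hm : (1 : ℝ) - t * c m = 0 := by
      have := congrFun hγ0 m
      simpa [hγ_def] using this
    constructor
    · nlinarith [mul_pos ht (lt_of_le_of_ne (le_of_not_gt (fun hcm : c m < 0 => by nlinarith)) (fun h0 : 0 = c m => by rw [← h0] at hm; norm_num at hm))]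
    · intro k hk
      have := congrFun hγ0 k
      simp only [hγ_def, if_neg hk, Pi.zero_apply, zero_sub, neg_eq_zero] at this
      exact (mul_eq_zero.mp this).resolve_left (ne_of_gt ht)
  · exact absurd (stmt_3_key W ω hnn hind hspan v γ m hv hγ0 hvnn hsub) hmin

/-- A nonnegative basis of a subspace W ⊆ ℝ^n with minimal supports: for any
two distinct basis vectors, the only z ∈ W with support contained in the
intersection of their supports is 0. -/
theorem stmt_3 {n d : ℕ} (W : Submodule ℝ (Fin n → ℝ))
    (ω : Fin d → Fin n → ℝ)
    (hnn : ∀ k i, 0 ≤ ω k i)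
    (hind : LinearIndependent ℝ ω)
    (hspan : Submodule.span ℝ (Set.range ω) = W)
    (hmin : ¬ ∃ η : Fin d → Fin n → ℝ,
      (∀ k i, 0 ≤ η k i) ∧ LinearIndependent ℝ η ∧
      Submodule.span ℝ (Set.range η) = W ∧
      (∃ k : Fin d → Fin d,
        (∀ i, Function.support (η i) ⊆ Function.support (ω (k i))) ∧
        (∃ i, Function.support (η i) ⊂ Function.support (ω (k i))))) :
    ∀ a b : Fin d, a ≠ b →
      ∀ z ∈ W, Function.support z ⊆
        Function.support (ω a) ∩ Function.support (ω b) → z = 0 := by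
  intro a b hab z hzW hsupp
  by_contra hz0
  have hzmem : z ∈ Submodule.span ℝ (Set.range ω) := hspan ▸ hzW
  obtain ⟨c, hc⟩ := (Submodule.mem_span_range_iff_exists_fun ℝ).mp hzmem
  have hsa : Function.support z ⊆ Function.support (ω a) :=
    hsupp.trans Set.inter_subset_left
  have hsb : Function.support z ⊆ Function.support (ω b) :=
    hsupp.trans Set.inter_subset_right
  by_cases hp : ∃ i, 0 < z i
  · obtain ⟨h1, -⟩ := stmt_3_aux W ω hnn hind hspan hmin c z a hc.symm hsa hp
    obtain ⟨-, h2⟩ := stmt_3_aux W ω hnn hind hspan hmin c z b hc.symm hsb hp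
    exact absurd (h2 a hab) (ne_of_gt h1)
  · push_neg at hp
    obtain ⟨i, hi⟩ := Function.ne_iff.mp hz0
    have hi' : 0 < -z i := by
      have := hp i
      have : z i < 0 := lt_of_le_of_ne this hi
      linarith
    have hnegz : (-z) = ∑ k, (-c) k • ω k := by
      rw [← hc]
      simp [neg_smul, Finset.sum_neg_distrib]
    have hnsa : Function.support (-z) ⊆ Function.support (ω a) := fun i hi => by
      apply hsa; intro h0; apply hi; simp [h0]
    have hnsb : Function.support (-z) ⊆ Function.support (ω b) := fun i hi => by
      apply hsb; intro h0; apply hi; simp [h0]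
    obtain ⟨h1, -⟩ := stmt_3_aux W ω hnn hind hspan hmin (-c) (-z) a hnegz hnsa ⟨i, hi'⟩
    obtain ⟨-, h2⟩ := stmt_3_aux W ω hnn hind hspan hmin (-c) (-z) b hnegz hnsb ⟨i, hi'⟩
    exact absurd (h2 a hab) (ne_of_gt h1)
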